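/- arXiv:1811.01413 — 2 statements merged into one kernel-verified Lean document; each statement's English description precedes it below -/
import Mathlib

section
/- Let G be a group and H a subgroup of G of finite index n. Then there exist a group homomorphism φ from G to the alternating group on 2 · n! letters (alternatingGroup (Fin (2 · n!))) and a subgroup J of that alternating group such that H is exactly the preimage φ⁻¹(J). -/
open Equiv Equiv.Perm

/-- A subgroup of finite index `n` is the preimage of a subgroup of the
alternating group on `2 · n!` letters under some homomorphism. -/
theorem stmt_7 {G : Type*} [Group G] (H : Subgroup G) (n : ℕ)
    (hn : H.index = n) (hpos : 0 < n) :
    ∃ (φ : G →* alternatingGroup (Fin (2 * Nat.factorial n)))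
      (J : Subgroup (alternatingGroup (Fin (2 * Nat.factorial n)))),
      H = J.comap φ := by
  classical
  set X := G ⧸ H
  have hfin : Nat.card X = n := hn
  have : Finite X := Nat.finite_of_card_ne_zero (by omega)
  have : Fintype X := Fintype.ofFinite X
  have hcard : Fintype.card X = n := by
    rw [← hfin, Nat.card_eq_fintype_card]
  -- diagonal into Perm (X ⊕ X)
  let d : Perm X →* Perm X × Perm X := (MonoidHom.id _).prod (MonoidHom.id _)
  have hle : Fintype.card (X ⊕ X) ≤ Fintype.card (Fin (2 * Nat.factorial n)) := by
    simp [Fintype.card_sum, hcard]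
    have := Nat.self_le_factorial n
    omega
  obtain ⟨ι⟩ := Function.Embedding.nonempty_of_card_le hle
  let ψ : Perm X →* Perm (Fin (2 * Nat.factorial n)) :=
    (viaEmbeddingHom ι).comp ((sumCongrHom X X).comp d)
  have hψinj : Function.Injective ψ := by
    refine (viaEmbeddingHom_injective ι).comp (sumCongrHom_injective.comp ?_)
    intro a b hab
    exact congrArg Prod.fst hab
  have hsign : ∀ σ : Perm X, Perm.sign (ψ σ) = 1 := by
    intro σ
    have : ψ σ = Perm.viaEmbedding (Equiv.sumCongr σ σ) ι := rfl
    rw [this, Perm.viaEmbedding, Perm.sign_extendDomain, Perm.sign_sumCongr]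
    simp
  let φ₁ : G →* Perm X := MulAction.toPermHom G X
  let Φ : G →* Perm (Fin (2 * Nat.factorial n)) := ψ.comp φ₁
  refine ⟨Φ.codRestrict (alternatingGroup _) (fun g => by
      rw [Perm.mem_alternatingGroup]; exact hsign _),
    ((MulAction.stabilizer (Perm X) ((1 : G) : X)).map ψ).comap
      (alternatingGroup _).subtype, ?_⟩
  ext g
  simp only [Subgroup.mem_comap, Subgroup.coe_subtype, MonoidHom.codRestrict_apply]
  constructor
  · intro hg
    refine Subgroup.mem_map.mpr ⟨φ₁ g, ?_, rfl⟩
    rw [MulAction.mem_stabilizer_iff]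
    show g • ((1 : G) : X) = _
    rw [← MulAction.mem_stabilizer_iff, MulAction.stabilizer_quotient]
    exact hg
  · intro hg
    obtain ⟨y, hy, hyg⟩ := Subgroup.mem_map.mp hg
    have : y = φ₁ g := hψinj hyg
    subst this
    rw [MulAction.mem_stabilizer_iff] at hy
    have : g • ((1 : G) : X) = ((1 : G) : X) := hy
    rw [← MulAction.mem_stabilizer_iff, MulAction.stabilizer_quotient] at this
    exact this
end

section
/- Let G be a finite group in which every element is a commutator, let c ∈ G, and let h and m be natural numbers with m ≥ 1 and with h ≥ 1 or m ≥ 2. Then the number of tuples (a₁, b₁, …, a_h, b_h, c₁, …, c_{m−1}) ∈ G^{2h + m − 1} satisfying [a₁, b₁] · [a₂, b₂] ⋯ [a_h, b_h] · c₁ · c₂ ⋯ c_{m−1} = c is at least |G|^{2h + m − 3}. -/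
private lemma prod_ofFn_succ' {M : Type*} [Monoid M] {n : ℕ} (g : Fin (n + 1) → M) :
    (List.ofFn g).prod =
      (List.ofFn (fun i : Fin n => g i.castSucc)).prod * g (Fin.last n) := by
  rw [List.ofFn_succ', List.prod_concat]

/-- Counting solutions of the surface relation: in a finite group in which every
element is a commutator, the equation `[a₁,b₁]⋯[a_h,b_h]·c₁⋯c_{m-1} = c` has at
least `|G|^(2h+m-3)` solutions, provided `m ≥ 1` and (`h ≥ 1` or `m ≥ 2`). -/
theorem stmt_10 {G : Type*} [Group G] [Fintype G]
    (hcomm : ∀ g : G, ∃ a b : G, g = a * b * a⁻¹ * b⁻¹)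
    (c : G) (h m : ℕ) (hm : 1 ≤ m) (hhm : 1 ≤ h ∨ 2 ≤ m) :
    Fintype.card G ^ (2 * h + m - 3) ≤
      Nat.card {t : (Fin h → G) × (Fin h → G) × (Fin (m - 1) → G) //
        (List.ofFn (fun i : Fin h =>
            t.1 i * t.2.1 i * (t.1 i)⁻¹ * (t.2.1 i)⁻¹)).prod *
          (List.ofFn t.2.2).prod = c} := by
  classical
  have hG : 1 ≤ Fintype.card G := Fintype.card_pos
  rcases Nat.lt_or_ge m 2 with h1 | h2
  · -- m = 1, so h ≥ 1
    obtain rfl : m = 1 := by omega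
    have hh : 1 ≤ h := by rcases hhm with h' | h' <;> omega
    obtain ⟨j, rfl⟩ : ∃ j, h = j + 1 := ⟨h - 1, by omega⟩
    set S := {t : (Fin (j + 1) → G) × (Fin (j + 1) → G) × (Fin (1 - 1) → G) //
        (List.ofFn (fun i : Fin (j + 1) =>
            t.1 i * t.2.1 i * (t.1 i)⁻¹ * (t.2.1 i)⁻¹)).prod *
          (List.ofFn t.2.2).prod = c} with hS
    have key : ∀ p : (Fin j → G) × (Fin j → G), ∃ t : S,
        (∀ i : Fin j, t.1.1 i.castSucc = p.1 i) ∧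
        (∀ i : Fin j, t.1.2.1 i.castSucc = p.2 i) := by
      intro ⟨a, b⟩
      set P := (List.ofFn (fun i : Fin j => a i * b i * (a i)⁻¹ * (b i)⁻¹)).prod with hP
      obtain ⟨A, B, hAB⟩ := hcomm (P⁻¹ * c)
      refine ⟨⟨(Fin.snoc a A, Fin.snoc b B, fun i => 1), ?_⟩, fun i => by simp, fun i => by simp⟩
      have : (List.ofFn (fun i : Fin (j + 1) =>
          Fin.snoc a A i * Fin.snoc b B i * (Fin.snoc a A i)⁻¹ * (Fin.snoc b B i)⁻¹)).prod
          = P * (A * B * A⁻¹ * B⁻¹) := by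
        rw [prod_ofFn_succ']
        simp [hP]
      simp only [this, ← hAB]
      simp [List.ofFn_zero]
    choose f hf1 hf2 using key
    have finj : Function.Injective f := by
      intro p q hpq
      ext i
      · rw [← hf1 p i, ← hf1 q i, hpq]
      · rw [← hf2 p i, ← hf2 q i, hpq]
    have hcard : Fintype.card ((Fin j → G) × (Fin j → G)) ≤ Nat.card S := by
      rw [Nat.card_eq_fintype_card]
      exact Fintype.card_le_of_injective f finj
    calc Fintype.card G ^ (2 * (j + 1) + 1 - 3)
        = Fintype.card ((Fin j → G) × (Fin j → G)) := by
          simp [Fintype.card_prod, ← pow_add]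
          congr 1
          omega
      _ ≤ Nat.card S := hcard
  · -- m ≥ 2
    obtain ⟨k, rfl⟩ : ∃ k, m = k + 2 := ⟨m - 2, by omega⟩
    set S := {t : (Fin h → G) × (Fin h → G) × (Fin (k + 2 - 1) → G) //
        (List.ofFn (fun i : Fin h =>
            t.1 i * t.2.1 i * (t.1 i)⁻¹ * (t.2.1 i)⁻¹)).prod *
          (List.ofFn t.2.2).prod = c} with hS
    have key : ∀ p : (Fin h → G) × (Fin h → G) × (Fin k → G), ∃ t : S,
        t.1.1 = p.1 ∧ t.1.2.1 = p.2.1 ∧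
        (∀ i : Fin k, t.1.2.2 (i.castSucc : Fin (k + 1)) = p.2.2 i) := by
      intro ⟨a, b, d⟩
      set Q := (List.ofFn (fun i : Fin h => a i * b i * (a i)⁻¹ * (b i)⁻¹)).prod with hQ
      set D := (List.ofFn d).prod with hD
      refine ⟨⟨(a, b, (Fin.snoc d ((Q * D)⁻¹ * c) : Fin (k + 1) → G)), ?_⟩,
        rfl, rfl, fun i => by simp⟩
      have : (List.ofFn (Fin.snoc d ((Q * D)⁻¹ * c) : Fin (k + 1) → G)).prod
          = D * ((Q * D)⁻¹ * c) := by
        rw [prod_ofFn_succ']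
        simp [hD]
      simp only [← hQ]
      rw [this]
      group
    choose f hf1 hf2 hf3 using key
    have finj : Function.Injective f := by
      intro p q hpq
      ext i
      · rw [← hf1 p, ← hf1 q, hpq]
      · rw [← hf2 p, ← hf2 q, hpq]
      · rw [← hf3 p i, ← hf3 q i, hpq]
    have hcard : Fintype.card ((Fin h → G) × (Fin h → G) × (Fin k → G)) ≤ Nat.card S := by
      rw [Nat.card_eq_fintype_card]
      exact Fintype.card_le_of_injective f finj
    calc Fintype.card G ^ (2 * h + (k + 2) - 3)
        ≤ Fintype.card G ^ (2 * h + k) := Nat.pow_le_pow_right hG (by omega)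
      _ = Fintype.card ((Fin h → G) × (Fin h → G) × (Fin k → G)) := by
          simp [Fintype.card_prod, ← pow_add]
          congr 1
          omega
      _ ≤ Nat.card S := hcard
end
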